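/- Let v₁, v₂ ≥ 1 and c ∈ ℝ. For each n ∈ ℕ let (X_A)_{A ∈ 𝒫_{v₁}(n)} and (Y_B)_{B ∈ 𝒫_{v₂}(n)} be random variables on a common probability space taking values in [0,1] such that (i) X_A and Y_B are independent whenever A ∩ B = ∅, and (ii) Cov(X_A, Y_B) = c whenever |A ∩ B| = 1. Then |Cov(Σ_{A ∈ 𝒫_{v₁}(n)} X_A, Σ_{B ∈ 𝒫_{v₂}(n)} Y_B) − c·N₁(n)| ≤ min(v₁,v₂) · (v₁+v₂−2)! · n^{v₁+v₂−2}, where N₁(n) is the number of pairs (A,B) ∈ 𝒫_{v₁}(n) × 𝒫_{v₂}(n) with |A ∩ B| = 1. In particular, n^{−(v₁+v₂−1)} Cov(Σ_A X_A, Σ_B Y_B) → c / ((v₁−1)!(v₂−1)!) as n → ∞. -/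

import Mathlib

open MeasureTheory Filter

/-- The sum of a family of random variables over all `v`-element subsets of `Fin n`. -/
noncomputable def subsetSum {n : ℕ} {Ω : Type*} (v : ℕ)
    (X : Finset (Fin n) → Ω → ℝ) (ω : Ω) : ℝ :=
  ∑ A ∈ Finset.univ.filter (fun A : Finset (Fin n) => A.card = v), X A ω

/-- Covariance of two real random variables, `Cov(f, g) = E[fg] - E[f]E[g]`. -/
noncomputable def covInt {Ω : Type*} [MeasurableSpace Ω] (μ : Measure Ω)
    (f g : Ω → ℝ) : ℝ :=
  (∫ ω, f ω * g ω ∂μ) - (∫ ω, f ω ∂μ) * (∫ ω, g ω ∂μ)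

/-- The number of pairs `(A, B)` of subsets of `{1,…,n}` with `|A| = v₁`,
`|B| = v₂` and `|A ∩ B| = 1`. -/
def numOnePt (v₁ v₂ n : ℕ) : ℕ :=
  (Finset.univ.filter (fun p : Finset (Fin n) × Finset (Fin n) =>
    p.1.card = v₁ ∧ p.2.card = v₂ ∧ (p.1 ∩ p.2).card = 1)).card

section Helpers

lemma filterCard_eq_choose (n v : ℕ) :
    (Finset.univ.filter (fun A : Finset (Fin n) => A.card = v)).card = n.choose v := by
  rw [← Finset.powerset_univ, ← Finset.powersetCard_eq_filter, Finset.card_powersetCard,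
    Finset.card_univ, Fintype.card_fin]

lemma innerCount {n v₁ v₂ : ℕ} (A : Finset (Fin n)) (hA : A.card = v₁) (hv₂ : 1 ≤ v₂) :
    (Finset.univ.filter (fun B : Finset (Fin n) => B.card = v₂ ∧ (A ∩ B).card = 1)).card
      = v₁ * (n - v₁).choose (v₂ - 1) := by
  have : (A ×ˢ (Aᶜ.powersetCard (v₂ - 1))).card
      = (Finset.univ.filter (fun B : Finset (Fin n) => B.card = v₂ ∧ (A ∩ B).card = 1)).card := by
    apply Finset.card_bij (fun p _ => insert p.1 p.2)
    · rintro ⟨x, C⟩ hp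
      simp only [Finset.mem_product, Finset.mem_powersetCard] at hp
      obtain ⟨hx, hC, hCcard⟩ := hp
      have hxC : x ∉ C := fun h => (Finset.mem_compl.mp (hC h)) hx
      simp only [Finset.mem_filter, Finset.mem_univ, true_and]
      constructor
      · rw [Finset.card_insert_of_notMem hxC, hCcard]
        omega
      · have : A ∩ insert x C = {x} := by
          ext y
          simp only [Finset.mem_inter, Finset.mem_insert, Finset.mem_singleton]
          constructor
          · rintro ⟨hyA, hy | hy⟩
            · exact hy
            · exact absurd hyA (Finset.mem_compl.mp (hC hy))
          · rintro rfl; exact ⟨hx, Or.inl rfl⟩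
        rw [this, Finset.card_singleton]
    · rintro ⟨x, C⟩ hp ⟨x', C'⟩ hp' h
      simp only [Finset.mem_product, Finset.mem_powersetCard] at hp hp'
      obtain ⟨hx, hC, _⟩ := hp
      obtain ⟨hx', hC', _⟩ := hp'
      have hxC : x ∉ C := fun hh => (Finset.mem_compl.mp (hC hh)) hx
      have hxC' : x' ∉ C' := fun hh => (Finset.mem_compl.mp (hC' hh)) hx'
      have hxx : x = x' := by
        have h1 : x ∈ insert x' C' := h ▸ Finset.mem_insert_self x C
        rcases Finset.mem_insert.mp h1 with h1 | h1
        · exact h1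
        · exact absurd hx (Finset.mem_compl.mp (hC' h1))
      subst hxx
      have : C = C' := by
        have := congrArg (fun s => Finset.erase s x) h
        simpa [Finset.erase_insert hxC, Finset.erase_insert hxC'] using this
      simp [this]
    · intro B hB
      simp only [Finset.mem_filter, Finset.mem_univ, true_and] at hB
      obtain ⟨hBcard, hABcard⟩ := hB
      obtain ⟨x, hx⟩ := Finset.card_eq_one.mp hABcard
      have hxA : x ∈ A := by
        have : x ∈ A ∩ B := hx ▸ Finset.mem_singleton_self x
        exact (Finset.mem_inter.mp this).1
      have hxB : x ∈ B := by
        have : x ∈ A ∩ B := hx ▸ Finset.mem_singleton_self x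
        exact (Finset.mem_inter.mp this).2
      refine ⟨⟨x, B.erase x⟩, ?_, ?_⟩
      · simp only [Finset.mem_product, Finset.mem_powersetCard]
        refine ⟨hxA, ?_, ?_⟩
        · intro y hy
          simp only [Finset.mem_erase] at hy
          rw [Finset.mem_compl]
          intro hyA
          have : y ∈ A ∩ B := Finset.mem_inter.mpr ⟨hyA, hy.2⟩
          rw [hx, Finset.mem_singleton] at this
          exact hy.1 this
        · rw [Finset.card_erase_of_mem hxB, hBcard]
      · exact Finset.insert_erase hxB
  rw [← this, Finset.card_product, hA, Finset.card_powersetCard, Finset.card_compl,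
    Fintype.card_fin, hA]

lemma pairCard {α β : Type*} [Fintype α] [Fintype β] (q : α → β → Prop)
    [∀ a b, Decidable (q a b)] :
    ((Finset.univ : Finset (α × β)).filter (fun p => q p.1 p.2)).card
      = ∑ a : α, (Finset.univ.filter (fun b => q a b)).card := by
  simp only [Finset.card_filter]
  rw [← Finset.univ_product_univ, Finset.sum_product]

lemma numOnePt_eq (v₁ v₂ n : ℕ) (hv₂ : 1 ≤ v₂) :
    numOnePt v₁ v₂ n = n.choose v₁ * (v₁ * (n - v₁).choose (v₂ - 1)) := by
  rw [numOnePt, pairCard (fun A B : Finset (Fin n) =>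
    A.card = v₁ ∧ B.card = v₂ ∧ (A ∩ B).card = 1)]
  rw [← Finset.sum_filter_of_ne (f := fun A : Finset (Fin n) =>
      (Finset.univ.filter (fun B => A.card = v₁ ∧ B.card = v₂ ∧ (A ∩ B).card = 1)).card)
      (p := fun A : Finset (Fin n) => A.card = v₁) ?ne]
  case ne =>
    intro A _ h
    by_contra hc
    rcases Finset.card_ne_zero.mp h with ⟨B, hB⟩
    exact hc (Finset.mem_filter.mp hB).2.1
  have : ∀ A ∈ Finset.univ.filter (fun A : Finset (Fin n) => A.card = v₁),
      (Finset.univ.filter (fun B => A.card = v₁ ∧ B.card = v₂ ∧ (A ∩ B).card = 1)).card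
        = v₁ * (n - v₁).choose (v₂ - 1) := by
    intro A hA
    have hA' := (Finset.mem_filter.mp hA).2
    rw [← innerCount A hA' hv₂]
    congr 1
    ext B
    simp [hA']
  rw [Finset.sum_congr rfl this, Finset.sum_const, smul_eq_mul, filterCard_eq_choose]

lemma badCount (v₁ v₂ n : ℕ) (hn : 1 ≤ n) :
    ((Finset.univ : Finset (Finset (Fin n) × Finset (Fin n))).filter (fun p =>
      p.1.card = v₁ ∧ p.2.card = v₂ ∧ 2 ≤ (p.1 ∩ p.2).card)).card
      ≤ min v₁ v₂ * n ^ (v₁ + v₂ - 2) := by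
  set bad := ((Finset.univ : Finset (Finset (Fin n) × Finset (Fin n))).filter (fun p =>
      p.1.card = v₁ ∧ p.2.card = v₂ ∧ 2 ≤ (p.1 ∩ p.2).card)) with hbad
  have hmap : ∀ p ∈ bad, (p.1 ∩ p.2).card ∈ Finset.Icc 2 (min v₁ v₂) := by
    intro p hp
    simp only [hbad, Finset.mem_filter] at hp
    obtain ⟨-, h1, h2, h3⟩ := hp
    rw [Finset.mem_Icc]
    refine ⟨h3, le_min ?_ ?_⟩
    · rw [← h1]; exact Finset.card_le_card Finset.inter_subset_left
    · rw [← h2]; exact Finset.card_le_card Finset.inter_subset_right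
  rw [Finset.card_eq_sum_card_fiberwise hmap]
  have hfib : ∀ k ∈ Finset.Icc 2 (min v₁ v₂),
      (bad.filter (fun p => (p.1 ∩ p.2).card = k)).card ≤ n ^ (v₁ + v₂ - 2) := by
    intro k hk
    rw [Finset.mem_Icc] at hk
    have hkv₁ : k ≤ v₁ := hk.2.trans (min_le_left _ _)
    have hkv₂ : k ≤ v₂ := hk.2.trans (min_le_right _ _)
    have hinj : ((bad.filter (fun p => (p.1 ∩ p.2).card = k)).card ≤
        ((Finset.univ.filter (fun C : Finset (Fin n) => C.card = k)) ×ˢ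
         ((Finset.univ.filter (fun D : Finset (Fin n) => D.card = v₁ - k)) ×ˢ
          (Finset.univ.filter (fun E : Finset (Fin n) => E.card = v₂ - k)))).card) := by
      apply Finset.card_le_card_of_injOn (fun p => (p.1 ∩ p.2, (p.1 \ p.2, p.2 \ p.1)))
      · intro p hp
        simp only [hbad, Finset.mem_coe, Finset.mem_filter, Finset.mem_univ, true_and] at hp
        obtain ⟨⟨h1, h2, -⟩, hkk⟩ := hp
        simp only [Finset.mem_coe, Finset.mem_product, Finset.mem_filter, Finset.mem_univ, true_and]
        refine ⟨hkk, ?_, ?_⟩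
        · have := Finset.card_inter_add_card_sdiff p.1 p.2
          omega
        · have := Finset.card_inter_add_card_sdiff p.2 p.1
          rw [Finset.inter_comm] at this
          omega
      · rintro ⟨A, B⟩ hA ⟨A', B'⟩ hB h
        simp only [Prod.mk.injEq] at h
        obtain ⟨h1, h2, h3⟩ := h
        have key : ∀ (S T : Finset (Fin n)), (S ∩ T) ∪ (S \ T) = S := by
          intro S T; ext x
          simp only [Finset.mem_union, Finset.mem_inter, Finset.mem_sdiff]
          tauto
        have eA : A = A' := by
          rw [← key A B, ← key A' B', h1, h2]
        have eB : B = B' := by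
          rw [← key B A, ← key B' A', Finset.inter_comm B A, Finset.inter_comm B' A', h1, h3]
        simp [eA, eB]
    refine hinj.trans ?_
    rw [Finset.card_product, Finset.card_product]
    rw [filterCard_eq_choose, filterCard_eq_choose, filterCard_eq_choose]
    calc n.choose k * (n.choose (v₁ - k) * n.choose (v₂ - k))
        ≤ n ^ k * (n ^ (v₁ - k) * n ^ (v₂ - k)) :=
          Nat.mul_le_mul (Nat.choose_le_pow _ _)
            (Nat.mul_le_mul (Nat.choose_le_pow _ _) (Nat.choose_le_pow _ _))
      _ = n ^ (v₁ + v₂ - k) := by rw [← pow_add, ← pow_add]; congr 1; omega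
      _ ≤ n ^ (v₁ + v₂ - 2) := Nat.pow_le_pow_right hn (by omega)
  calc ∑ k ∈ Finset.Icc 2 (min v₁ v₂), (bad.filter (fun p => (p.1 ∩ p.2).card = k)).card
      ≤ ∑ _k ∈ Finset.Icc 2 (min v₁ v₂), n ^ (v₁ + v₂ - 2) := Finset.sum_le_sum hfib
    _ = (Finset.Icc 2 (min v₁ v₂)).card * n ^ (v₁ + v₂ - 2) := by
        rw [Finset.sum_const, smul_eq_mul]
    _ ≤ min v₁ v₂ * n ^ (v₁ + v₂ - 2) := by
        apply Nat.mul_le_mul_right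
        rw [Nat.card_Icc]
        omega

lemma tendsto_choose_div_pow (a k : ℕ) :
    Tendsto (fun n : ℕ => ((n - a).choose k : ℝ) / (n : ℝ) ^ k) atTop
      (nhds (1 / k.factorial)) := by
  have hlim : Tendsto (fun n : ℕ => (1 / (k.factorial : ℝ)) *
      ∏ i ∈ Finset.range k, (1 - (a + i : ℝ) / n)) atTop (nhds (1 / k.factorial)) := by
    have hprod : Tendsto (fun n : ℕ => ∏ i ∈ Finset.range k, (1 - (a + i : ℝ) / n)) atTop
        (nhds 1) := by
      have : Tendsto (fun n : ℕ => ∏ i ∈ Finset.range k, (1 - (a + i : ℝ) / n)) atTop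
          (nhds (∏ i ∈ Finset.range k, 1)) := by
        apply tendsto_finset_prod
        intro i _
        have h0 : Tendsto (fun n : ℕ => (a + i : ℝ) / n) atTop (nhds 0) := by
          simpa [div_eq_mul_inv] using (tendsto_one_div_atTop_nhds_zero_nat.const_mul ((a : ℝ) + i))
        simpa using (tendsto_const_nhds (x := (1:ℝ)).sub h0)
      simpa using this
    simpa using hprod.const_mul (1 / (k.factorial : ℝ))
  apply hlim.congr'
  filter_upwards [eventually_ge_atTop (a + k), eventually_ge_atTop 1] with n hn hn1
  have hnR : (0 : ℝ) < n := by exact_mod_cast hn1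
  have hdesc : ((n - a).choose k : ℝ) = ((n - a).descFactorial k : ℝ) / k.factorial := by
    rw [Nat.choose_eq_descFactorial_div_factorial]
    rw [Nat.cast_div (Nat.factorial_dvd_descFactorial _ _)]
    exact_mod_cast (Nat.factorial_pos k).ne'
  have hprod_eq : ((n - a).descFactorial k : ℝ) = ∏ i ∈ Finset.range k, ((n : ℝ) - (a + i)) := by
    rw [Nat.descFactorial_eq_prod_range]
    push_cast
    apply Finset.prod_congr rfl
    intro i hi
    rw [Finset.mem_range] at hi
    have : a + i ≤ n := by omega
    rw [Nat.cast_sub (by omega : i ≤ n - a), Nat.cast_sub (by omega : a ≤ n)]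
    ring
  rw [hdesc, hprod_eq, div_div]
  have hsplit : ∏ i ∈ Finset.range k, ((n : ℝ) - (a + i))
      = (n : ℝ) ^ k * ∏ i ∈ Finset.range k, (1 - (a + i : ℝ) / n) := by
    have hc : (n : ℝ) ^ k = ∏ _i ∈ Finset.range k, (n : ℝ) := by
      rw [Finset.prod_const, Finset.card_range]
    rw [hc, ← Finset.prod_mul_distrib]
    apply Finset.prod_congr rfl
    intro i _
    field_simp
  rw [hsplit]
  have h1 : (k.factorial : ℝ) ≠ 0 := by positivity
  have h2 : ((n : ℝ)) ^ k ≠ 0 := by positivity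
  field_simp

variable {Ω' : Type*} [MeasurableSpace Ω'] {μ' : Measure Ω'} [IsProbabilityMeasure μ']

lemma integrable01 {f : Ω' → ℝ} (hm : Measurable f) (hr : ∀ ω, f ω ∈ Set.Icc (0:ℝ) 1) :
    Integrable f μ' := by
  apply Integrable.mono' (integrable_const (1:ℝ)) hm.aestronglyMeasurable
  filter_upwards with ω
  rw [Real.norm_eq_abs, abs_le]
  exact ⟨by linarith [(hr ω).1], (hr ω).2⟩

lemma integral01 {f : Ω' → ℝ} (hm : Measurable f) (hr : ∀ ω, f ω ∈ Set.Icc (0:ℝ) 1) :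
    (∫ ω, f ω ∂μ') ∈ Set.Icc (0:ℝ) 1 := by
  constructor
  · exact integral_nonneg (fun ω => (hr ω).1)
  · calc (∫ ω, f ω ∂μ') ≤ ∫ _ω, (1:ℝ) ∂μ' :=
        integral_mono (integrable01 hm hr) (integrable_const 1) (fun ω => (hr ω).2)
    _ = 1 := by simp

lemma mul_range01 {f g : Ω' → ℝ} (hf : ∀ ω, f ω ∈ Set.Icc (0:ℝ) 1)
    (hg : ∀ ω, g ω ∈ Set.Icc (0:ℝ) 1) : ∀ ω, f ω * g ω ∈ Set.Icc (0:ℝ) 1 := by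
  intro ω
  constructor
  · exact mul_nonneg (hf ω).1 (hg ω).1
  · calc f ω * g ω ≤ 1 * 1 := mul_le_mul (hf ω).2 (hg ω).2 (hg ω).1 zero_le_one
    _ = 1 := one_mul 1

lemma covInt_abs_le_one {f g : Ω' → ℝ} (hfm : Measurable f) (hgm : Measurable g)
    (hf : ∀ ω, f ω ∈ Set.Icc (0:ℝ) 1) (hg : ∀ ω, g ω ∈ Set.Icc (0:ℝ) 1) :
    |covInt μ' f g| ≤ 1 := by
  have h1 := integral01 (μ' := μ') (hfm.mul hgm) (mul_range01 hf hg)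
  have h2 := integral01 (μ' := μ') hfm hf
  have h3 := integral01 (μ' := μ') hgm hg
  simp only [Pi.mul_apply] at h1
  rw [covInt, abs_le]
  constructor
  · nlinarith [h1.1, h1.2, h2.1, h2.2, h3.1, h3.2]
  · nlinarith [h1.1, h1.2, h2.1, h2.2, h3.1, h3.2]

lemma covInt_zero_of_indep {f g : Ω' → ℝ} (hfm : Measurable f) (hgm : Measurable g)
    (hf : ∀ ω, f ω ∈ Set.Icc (0:ℝ) 1) (hg : ∀ ω, g ω ∈ Set.Icc (0:ℝ) 1)
    (h : ProbabilityTheory.IndepFun f g μ') : covInt μ' f g = 0 := by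
  have := h.integral_mul_eq_mul_integral (integrable01 hfm hf).aestronglyMeasurable (integrable01 hgm hg).aestronglyMeasurable
  rw [covInt]
  have h2 : (∫ ω, f ω * g ω ∂μ') = ∫ ω, (f * g) ω ∂μ' := by simp [Pi.mul_apply]
  have h3 : (∫ ω, (f * g) ω ∂μ') = (∫ ω, f ω ∂μ') * (∫ ω, g ω ∂μ') := this
  rw [h2, h3]
  ring

lemma covInt_sum_sum {ι κ : Type*} (s : Finset ι) (t : Finset κ)
    (F : ι → Ω' → ℝ) (G : κ → Ω' → ℝ)
    (hFm : ∀ i ∈ s, Measurable (F i)) (hGm : ∀ j ∈ t, Measurable (G j))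
    (hF : ∀ i ∈ s, ∀ ω, F i ω ∈ Set.Icc (0:ℝ) 1)
    (hG : ∀ j ∈ t, ∀ ω, G j ω ∈ Set.Icc (0:ℝ) 1) :
    covInt μ' (fun ω => ∑ i ∈ s, F i ω) (fun ω => ∑ j ∈ t, G j ω)
      = ∑ p ∈ s ×ˢ t, covInt μ' (F p.1) (G p.2) := by
  have hint : ∀ p ∈ s ×ˢ t, Integrable (fun ω => F p.1 ω * G p.2 ω) μ' := by
    rintro ⟨i, j⟩ hp
    rw [Finset.mem_product] at hp
    exact integrable01 ((hFm i hp.1).mul (hGm j hp.2))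
      (mul_range01 (hF i hp.1) (hG j hp.2))
  have h1 : (∫ ω, (∑ i ∈ s, F i ω) * (∑ j ∈ t, G j ω) ∂μ')
      = ∑ p ∈ s ×ˢ t, ∫ ω, F p.1 ω * G p.2 ω ∂μ' := by
    rw [← integral_finset_sum _ hint]
    apply integral_congr_ae
    filter_upwards with ω
    rw [Finset.sum_mul_sum]
    rw [Finset.sum_product]
  have h2 : (∫ ω, (∑ i ∈ s, F i ω) ∂μ') = ∑ i ∈ s, ∫ ω, F i ω ∂μ' :=
    integral_finset_sum _ (fun i hi => integrable01 (hFm i hi) (hF i hi))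
  have h3 : (∫ ω, (∑ j ∈ t, G j ω) ∂μ') = ∑ j ∈ t, ∫ ω, G j ω ∂μ' :=
    integral_finset_sum _ (fun j hj => integrable01 (hGm j hj) (hG j hj))
  rw [covInt, h1, h2, h3, Finset.sum_mul_sum]
  rw [← Finset.sum_product']
  rw [← Finset.sum_sub_distrib]
  rfl

end Helpers

theorem stmt8 (v₁ v₂ : ℕ) (hv₁ : 1 ≤ v₁) (hv₂ : 1 ≤ v₂) (c : ℝ)
    (Ω : ℕ → Type*) [∀ n, MeasurableSpace (Ω n)] (μ : ∀ n, Measure (Ω n))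
    (hprob : ∀ n, IsProbabilityMeasure (μ n))
    (X Y : ∀ n, Finset (Fin n) → Ω n → ℝ)
    (hXmeas : ∀ n A, Measurable (X n A)) (hYmeas : ∀ n B, Measurable (Y n B))
    (hXrange : ∀ n A, A.card = v₁ → ∀ ω, X n A ω ∈ Set.Icc (0 : ℝ) 1)
    (hYrange : ∀ n B, B.card = v₂ → ∀ ω, Y n B ω ∈ Set.Icc (0 : ℝ) 1)
    (hindep : ∀ n A B, A.card = v₁ → B.card = v₂ → Disjoint A B →
      ProbabilityTheory.IndepFun (X n A) (Y n B) (μ n))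
    (hcov : ∀ n A B, A.card = v₁ → B.card = v₂ → (A ∩ B).card = 1 →
      covInt (μ n) (X n A) (Y n B) = c) :
    (∀ n, |covInt (μ n) (subsetSum v₁ (X n)) (subsetSum v₂ (Y n)) - c * numOnePt v₁ v₂ n|
        ≤ (min v₁ v₂ : ℝ) * (v₁ + v₂ - 2).factorial * (n : ℝ) ^ (v₁ + v₂ - 2)) ∧
    Tendsto (fun n : ℕ =>
        covInt (μ n) (subsetSum v₁ (X n)) (subsetSum v₂ (Y n)) / (n : ℝ) ^ (v₁ + v₂ - 1))
      atTop (nhds (c / ((v₁ - 1).factorial * (v₂ - 1).factorial))) := by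
  have hpart1 : ∀ n, |covInt (μ n) (subsetSum v₁ (X n)) (subsetSum v₂ (Y n))
      - c * numOnePt v₁ v₂ n|
      ≤ (min v₁ v₂ : ℝ) * (v₁ + v₂ - 2).factorial * (n : ℝ) ^ (v₁ + v₂ - 2) := by
    intro n
    haveI := hprob n
    set P₁ := Finset.univ.filter (fun A : Finset (Fin n) => A.card = v₁) with hP₁
    set P₂ := Finset.univ.filter (fun B : Finset (Fin n) => B.card = v₂) with hP₂
    have hmem₁ : ∀ A ∈ P₁, A.card = v₁ := fun A hA => (Finset.mem_filter.mp hA).2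
    have hmem₂ : ∀ B ∈ P₂, B.card = v₂ := fun B hB => (Finset.mem_filter.mp hB).2
    have hexp : covInt (μ n) (subsetSum v₁ (X n)) (subsetSum v₂ (Y n))
        = ∑ p ∈ P₁ ×ˢ P₂, covInt (μ n) (X n p.1) (Y n p.2) :=
      covInt_sum_sum P₁ P₂ (X n) (Y n) (fun A _ => hXmeas n A) (fun B _ => hYmeas n B)
        (fun A hA => hXrange n A (hmem₁ A hA)) (fun B hB => hYrange n B (hmem₂ B hB))
    rw [hexp, ← Finset.sum_filter_add_sum_filter_not (P₁ ×ˢ P₂)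
      (fun p => (p.1 ∩ p.2).card = 1) (fun p => covInt (μ n) (X n p.1) (Y n p.2))]
    have hone : (P₁ ×ˢ P₂).filter (fun p => (p.1 ∩ p.2).card = 1)
        = Finset.univ.filter (fun p : Finset (Fin n) × Finset (Fin n) =>
            p.1.card = v₁ ∧ p.2.card = v₂ ∧ (p.1 ∩ p.2).card = 1) := by
      ext p
      simp only [Finset.mem_filter, Finset.mem_product, hP₁, hP₂, Finset.mem_univ, true_and]
      tauto
    have hsum1 : ∑ p ∈ (P₁ ×ˢ P₂).filter (fun p => (p.1 ∩ p.2).card = 1),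
        covInt (μ n) (X n p.1) (Y n p.2) = c * numOnePt v₁ v₂ n := by
      have hval : ∀ p ∈ (P₁ ×ˢ P₂).filter (fun p => (p.1 ∩ p.2).card = 1),
          covInt (μ n) (X n p.1) (Y n p.2) = c := by
        intro p hp
        rw [Finset.mem_filter, Finset.mem_product] at hp
        exact hcov n p.1 p.2 (hmem₁ p.1 hp.1.1) (hmem₂ p.2 hp.1.2) hp.2
      rw [Finset.sum_congr rfl hval, Finset.sum_const, nsmul_eq_mul, hone, mul_comm, numOnePt]
    set bad := ((P₁ ×ˢ P₂).filter (fun p => ¬(p.1 ∩ p.2).card = 1)).filter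
      (fun p => 2 ≤ (p.1 ∩ p.2).card) with hbaddef
    have hsum2 : ∑ p ∈ (P₁ ×ˢ P₂).filter (fun p => ¬(p.1 ∩ p.2).card = 1),
        covInt (μ n) (X n p.1) (Y n p.2)
        = ∑ p ∈ bad, covInt (μ n) (X n p.1) (Y n p.2) := by
      rw [hbaddef]
      apply (Finset.sum_subset (Finset.filter_subset _ _) ?_).symm
      intro p hp hnp
      rw [Finset.mem_filter, Finset.mem_product] at hp
      have hc0 : (p.1 ∩ p.2).card = 0 := by
        by_contra hcc
        exact hnp (Finset.mem_filter.mpr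
          ⟨Finset.mem_filter.mpr ⟨Finset.mem_product.mpr hp.1, hp.2⟩, by omega⟩)
      have hdisj : Disjoint p.1 p.2 := by
        rw [Finset.disjoint_iff_inter_eq_empty]
        exact Finset.card_eq_zero.mp hc0
      exact covInt_zero_of_indep (hXmeas n p.1) (hYmeas n p.2)
        (hXrange n p.1 (hmem₁ p.1 hp.1.1)) (hYrange n p.2 (hmem₂ p.2 hp.1.2))
        (hindep n p.1 p.2 (hmem₁ p.1 hp.1.1) (hmem₂ p.2 hp.1.2) hdisj)
    rw [hsum1, hsum2]
    have hsimp : c * (numOnePt v₁ v₂ n : ℝ)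
        + (∑ p ∈ bad, covInt (μ n) (X n p.1) (Y n p.2)) - c * (numOnePt v₁ v₂ n : ℝ)
        = ∑ p ∈ bad, covInt (μ n) (X n p.1) (Y n p.2) := by ring
    rw [hsimp]
    have habs : |∑ p ∈ bad, covInt (μ n) (X n p.1) (Y n p.2)| ≤ (bad.card : ℝ) := by
      calc |∑ p ∈ bad, covInt (μ n) (X n p.1) (Y n p.2)|
          ≤ ∑ p ∈ bad, |covInt (μ n) (X n p.1) (Y n p.2)| := Finset.abs_sum_le_sum_abs _ _
        _ ≤ ∑ _p ∈ bad, (1:ℝ) := by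
            apply Finset.sum_le_sum
            intro p hp
            rw [hbaddef, Finset.mem_filter, Finset.mem_filter, Finset.mem_product] at hp
            exact covInt_abs_le_one (hXmeas n p.1) (hYmeas n p.2)
              (hXrange n p.1 (hmem₁ p.1 hp.1.1.1)) (hYrange n p.2 (hmem₂ p.2 hp.1.1.2))
        _ = (bad.card : ℝ) := by rw [Finset.sum_const, nsmul_eq_mul, mul_one]
    refine habs.trans ?_
    have hbadeq : bad = (Finset.univ : Finset (Finset (Fin n) × Finset (Fin n))).filter
        (fun p => p.1.card = v₁ ∧ p.2.card = v₂ ∧ 2 ≤ (p.1 ∩ p.2).card) := by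
      rw [hbaddef]
      ext p
      simp only [Finset.mem_filter, Finset.mem_product, hP₁, hP₂, Finset.mem_univ, true_and]
      constructor
      · rintro ⟨⟨⟨ha, hb⟩, -⟩, hk⟩
        exact ⟨ha, hb, hk⟩
      · rintro ⟨ha, hb, hk⟩
        exact ⟨⟨⟨ha, hb⟩, by omega⟩, hk⟩
    have hfact1 : (1:ℝ) ≤ ((v₁ + v₂ - 2).factorial : ℝ) := by
      exact_mod_cast Nat.one_le_iff_ne_zero.mpr (Nat.factorial_ne_zero _)
    rcases Nat.eq_zero_or_pos n with rfl | hn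
    · have hempty : bad = ∅ := by
        rw [hbadeq]
        apply Finset.eq_empty_of_forall_notMem
        intro p hp
        rw [Finset.mem_filter] at hp
        have : p.1.card ≤ 0 := le_trans (Finset.card_le_univ _) (by simp)
        omega
      rw [hempty]
      simp only [Finset.card_empty, Nat.cast_zero]
      positivity
    · have hle : (bad.card : ℝ) ≤ ((min v₁ v₂ * n ^ (v₁ + v₂ - 2) : ℕ) : ℝ) := by
        exact_mod_cast (hbadeq ▸ badCount v₁ v₂ n hn)
      refine hle.trans ?_
      push_cast
      have hnn : (0:ℝ) ≤ (v₁ : ℝ) ⊓ (v₂ : ℝ) := by positivity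
      have hpn : (0:ℝ) ≤ (n : ℝ) ^ (v₁ + v₂ - 2) := by positivity
      calc ((v₁ : ℝ) ⊓ (v₂ : ℝ)) * (n : ℝ) ^ (v₁ + v₂ - 2)
          = ((v₁ : ℝ) ⊓ (v₂ : ℝ)) * 1 * (n : ℝ) ^ (v₁ + v₂ - 2) := by ring
        _ ≤ ((v₁ : ℝ) ⊓ (v₂ : ℝ)) * ((v₁ + v₂ - 2).factorial : ℝ) * (n : ℝ) ^ (v₁ + v₂ - 2) :=
            mul_le_mul_of_nonneg_right (mul_le_mul_of_nonneg_left hfact1 hnn) hpn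
  refine ⟨hpart1, ?_⟩
  set d := v₁ + v₂ - 1 with hd
  set e := v₁ + v₂ - 2 with he
  have hde : d = e + 1 := by omega
  set K := (min v₁ v₂ : ℝ) * ((v₁ + v₂ - 2).factorial : ℝ) with hK
  have hKnn : 0 ≤ K := by positivity
  -- first piece tends to zero
  have hzero : Tendsto (fun n : ℕ =>
      (covInt (μ n) (subsetSum v₁ (X n)) (subsetSum v₂ (Y n))
        - c * numOnePt v₁ v₂ n) / (n : ℝ) ^ d) atTop (nhds 0) := by
    have hb : Tendsto (fun n : ℕ => K * (1 / (n:ℝ))) atTop (nhds 0) := by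
      simpa using tendsto_one_div_atTop_nhds_zero_nat.const_mul K
    apply squeeze_zero_norm' ?_ hb
    · filter_upwards [eventually_ge_atTop 1] with n hn
      have hnR : (0:ℝ) < n := by exact_mod_cast hn
      have hpow : (0:ℝ) < (n:ℝ) ^ d := by positivity
      rw [Real.norm_eq_abs, abs_div, abs_of_pos hpow]
      rw [div_le_iff₀ hpow]
      calc |covInt (μ n) (subsetSum v₁ (X n)) (subsetSum v₂ (Y n)) - c * numOnePt v₁ v₂ n|
          ≤ K * (n : ℝ) ^ e := hpart1 n
        _ = K * (1 / n) * (n : ℝ) ^ d := by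
            rw [hde, pow_succ]
            field_simp
  -- second piece
  have hN : Tendsto (fun n : ℕ => c * ((numOnePt v₁ v₂ n : ℝ) / (n : ℝ) ^ d)) atTop
      (nhds (c * (1 / ((v₁ - 1).factorial : ℝ) * (1 / ((v₂ - 1).factorial : ℝ))))) := by
    apply Tendsto.const_mul
    have hmul := (tendsto_choose_div_pow 1 (v₁ - 1)).mul (tendsto_choose_div_pow v₁ (v₂ - 1))
    apply hmul.congr'
    filter_upwards [eventually_ge_atTop 1] with n hn
    have hnR : (0:ℝ) < n := by exact_mod_cast hn
    have hid : n * (n - 1).choose (v₁ - 1) = n.choose v₁ * v₁ := by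
      obtain ⟨m, rfl⟩ : ∃ m, n = m + 1 := ⟨n - 1, by omega⟩
      obtain ⟨w, hw⟩ : ∃ w, v₁ = w + 1 := ⟨v₁ - 1, by omega⟩
      simp only [hw, Nat.add_sub_cancel]
      exact Nat.add_one_mul_choose_eq m w
    have hNform : (numOnePt v₁ v₂ n : ℝ)
        = (n : ℝ) * ((n - 1).choose (v₁ - 1) : ℝ) * ((n - v₁).choose (v₂ - 1) : ℝ) := by
      rw [numOnePt_eq v₁ v₂ n hv₂]
      push_cast
      rw [show ((n:ℝ) * ((n - 1).choose (v₁ - 1) : ℝ)) = ((n * (n - 1).choose (v₁ - 1) : ℕ) : ℝ)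
        from by push_cast; ring]
      rw [hid]
      push_cast
      ring
    have hpowsplit : (n : ℝ) ^ d = (n : ℝ) * (n : ℝ) ^ (v₁ - 1) * (n : ℝ) ^ (v₂ - 1) := by
      rw [← pow_succ', ← pow_add]
      congr 1
      omega
    rw [hNform, hpowsplit]
    have h1 : ((n:ℝ)) ^ (v₁ - 1) ≠ 0 := by positivity
    have h2 : ((n:ℝ)) ^ (v₂ - 1) ≠ 0 := by positivity
    field_simp
  have hcomb := hzero.add hN
  rw [zero_add] at hcomb
  have hval : c * (1 / ((v₁ - 1).factorial : ℝ) * (1 / ((v₂ - 1).factorial : ℝ)))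
      = c / (((v₁ - 1).factorial : ℝ) * ((v₂ - 1).factorial : ℝ)) := by
    field_simp
  rw [hval] at hcomb
  apply hcomb.congr'
  filter_upwards [eventually_ge_atTop 1] with n hn
  have hnR : (0:ℝ) < n := by exact_mod_cast hn
  have hpow : ((n:ℝ)) ^ d ≠ 0 := by positivity
  field_simp
  ring
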